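/- Let φ : [0,1] → [0,1] be upward continuous and satisfy φ(ε) ≥ ε for all ε, and let ŵ⁻¹ be defined from φ as ŵ⁻¹(ε) = sup{v : sup{ε' : φ(ε') ≤ v} ≤ ε}. If h : [0,1] → [0,1] is monotone nondecreasing and h(ε) ≤ φ(ε) for all ε, then h(ε) ≤ ŵ⁻¹(ε) for all ε. That is, ŵ⁻¹ is the largest nondecreasing function pointwise dominated by φ. -/
import Mathlib


open Set

/-- `ŵ⁻¹` is the largest nondecreasing function pointwise dominated by `φ`: if `φ` is
upward continuous with `φ ε ≥ ε`, and `h : [0,1] → [0,1]` is nondecreasing with `h ≤ φ`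
pointwise, then `h ≤ ŵ⁻¹` pointwise, where `ŵ(v) = sup {ε : φ ε ≤ v}` and
`ŵ⁻¹(ε) = sup {v : ŵ v ≤ ε}`. -/
theorem stmt17 (φ h what whatinv : ℝ → ℝ)
    (hmap : ∀ ε ∈ Set.Icc (0:ℝ) 1, φ ε ∈ Set.Icc (0:ℝ) 1)
    (hge : ∀ ε ∈ Set.Icc (0:ℝ) 1, ε ≤ φ ε)
    (hup : ∀ x ∈ Set.Icc (0:ℝ) 1,
      ¬ (∃ δ > 0, ∀ η > 0, ∃ x' ∈ Set.Ioo (x - η) x ∩ Set.Icc (0:ℝ) 1,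
            φ x' + δ < φ x) ∧
      ¬ (∃ δ > 0, ∀ η > 0, ∃ x' ∈ Set.Ioo x (x + η) ∩ Set.Icc (0:ℝ) 1,
            φ x + δ < φ x'))
    (hwhat : ∀ v, what v = sSup {ε : ℝ | ε ∈ Set.Icc (0:ℝ) 1 ∧ φ ε ≤ v})
    (hwhatinv : ∀ ε, whatinv ε = sSup {v : ℝ | v ∈ Set.Icc (0:ℝ) 1 ∧ what v ≤ ε})
    (hhmono : MonotoneOn h (Set.Icc 0 1))
    (hhmap : ∀ ε ∈ Set.Icc (0:ℝ) 1, h ε ∈ Set.Icc (0:ℝ) 1)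
    (hhle : ∀ ε ∈ Set.Icc (0:ℝ) 1, h ε ≤ φ ε) :
    ∀ ε ∈ Set.Icc (0:ℝ) 1, h ε ≤ whatinv ε := by
  intro ε hε
  rw [hwhatinv]
  set S := {v : ℝ | v ∈ Set.Icc (0:ℝ) 1 ∧ what v ≤ ε} with hS
  -- Key claim: any v ∈ [0,1] with v < h ε belongs to S.
  have hwle : ∀ v ∈ Set.Icc (0:ℝ) 1, v < h ε → what v ≤ ε := by
    intro v hv hvlt
    rw [hwhat]
    apply Real.sSup_le
    · intro x hx
      by_contra hxe
      push_neg at hxe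
      have h1 : h ε ≤ h x := hhmono hε hx.1 hxe.le
      have h2 : h x ≤ φ x := hhle x hx.1
      linarith [hx.2]
    · exact hε.1
  have h0S : (0:ℝ) ∈ S := by
    constructor
    · exact ⟨le_refl _, zero_le_one⟩
    · rw [hwhat]
      refine le_trans ?_ hε.1
      apply Real.sSup_le
      · intro x hx
        have := hge x hx.1
        linarith [hx.2]
      · exact le_refl 0
  have hbdd : BddAbove S := ⟨1, fun v hv => hv.1.2⟩
  rw [le_csSup_iff hbdd ⟨0, h0S⟩]
  intro b hb
  have hb0 : (0:ℝ) ≤ b := hb h0S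
  have hε1 : h ε ≤ 1 := (hhmap ε hε).2
  by_contra hcon
  push_neg at hcon
  set c := (b + h ε) / 2 with hc
  have hc1 : b < c := by rw [hc]; linarith
  have hc2 : c < h ε := by rw [hc]; linarith
  have hcI : c ∈ Set.Icc (0:ℝ) 1 := ⟨by linarith, by linarith⟩
  exact absurd (hb ⟨hcI, hwle c hcI hc2⟩) (not_le.mpr hc1)
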